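/- Nishimori gauge identity for a two-bond correlation: for every pair of bonds b, b' ∈ B, [⟨S_b S_{b'}⟩] = [⟨S_b S_{b'}⟩²]. -/

import Mathlib

open MeasureTheory ProbabilityTheory Filter

noncomputable section

/-- The real value ±1 of a Boolean spin. -/
def spin (s : Bool) : ℝ := if s then 1 else -1

/-- The bond spin `S_b = S_n S_{n'}` for a bond `b` with endpoints `ep b = (n, n')`. -/
def bondSpin {V ι : Type*} (ep : ι → V × V) (S : V → Bool) (b : ι) : ℝ :=
  spin (S (ep b).1) * spin (S (ep b).2)

/-- The potential `U(j, S) = Σ_b x_b j_b S_b`. -/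
def potential {V ι : Type*} [Fintype ι] (ep : ι → V × V) (x j : ι → ℝ)
    (S : V → Bool) : ℝ :=
  ∑ b, x b * j b * bondSpin ep S b

/-- The partition function `Z(j) = Σ_S exp U(j,S)`. -/
def partitionFn {V ι : Type*} [Fintype V] [DecidableEq V] [Fintype ι]
    (ep : ι → V × V) (x j : ι → ℝ) : ℝ :=
  ∑ S : V → Bool, Real.exp (potential ep x j S)

/-- The Boltzmann–Gibbs expectation `⟨f⟩` at fixed disorder `j`. -/
def gibbs {V ι : Type*} [Fintype V] [DecidableEq V] [Fintype ι]
    (ep : ι → V × V) (x j : ι → ℝ) (f : (V → Bool) → ℝ) : ℝ :=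
  (∑ S : V → Bool, f S * Real.exp (potential ep x j S)) / partitionFn ep x j

/-- The law of the couplings: independent Gaussians, `j_b` of mean `x_b` and variance 1. -/
def couplings {ι : Type*} [Fintype ι] (x : ι → ℝ) : Measure (ι → ℝ) :=
  Measure.pi fun b => gaussianReal (x b) 1

/-- The quenched average `[F]`. -/
def quenched {ι : Type*} [Fintype ι] (x : ι → ℝ) (F : (ι → ℝ) → ℝ) : ℝ :=
  ∫ j, F j ∂(couplings x)

/-- The quenched pressure `P({x}) = [ln Z]`. -/
def pressure {V ι : Type*} [Fintype V] [DecidableEq V] [Fintype ι]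
    (ep : ι → V × V) (x : ι → ℝ) : ℝ :=
  quenched x fun j => Real.log (partitionFn ep x j)


instance {ι : Type*} [Fintype ι] (x : ι → ℝ) : IsProbabilityMeasure (couplings x) := by
  unfold couplings; infer_instance


lemma spin_mul_self (s : Bool) : spin s * spin s = 1 := by cases s <;> simp [spin]

lemma spin_beq (s t : Bool) : spin (s == t) = spin s * spin t := by
  cases s <;> cases t <;> simp [spin]

lemma abs_spin (s : Bool) : |spin s| = 1 := by cases s <;> simp [spin]

lemma bondSpin_xor {V ι : Type*} (ep : ι → V × V) (S τ : V → Bool) (c : ι) :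
    bondSpin ep (fun n => S n == τ n) c = bondSpin ep S c * bondSpin ep τ c := by
  unfold bondSpin
  rw [spin_beq, spin_beq]; ring

lemma bondSpin_mul_self {V ι : Type*} (ep : ι → V × V) (τ : V → Bool) (c : ι) :
    bondSpin ep τ c * bondSpin ep τ c = 1 := by
  unfold bondSpin
  have h1 := spin_mul_self (τ (ep c).1)
  have h2 := spin_mul_self (τ (ep c).2)
  nlinarith [h1, h2]

lemma abs_bondSpin {V ι : Type*} (ep : ι → V × V) (S : V → Bool) (c : ι) :
    |bondSpin ep S c| = 1 := by
  unfold bondSpin; rw [abs_mul, abs_spin, abs_spin, one_mul]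

/-- the gauge transformation as a permutation of spin configurations -/
def gaugePerm {V : Type*} (τ : V → Bool) : Equiv.Perm (V → Bool) where
  toFun S := fun n => S n == τ n
  invFun S := fun n => S n == τ n
  left_inv S := by funext n; simp
  right_inv S := by funext n; simp

lemma potential_flip {V ι : Type*} [Fintype ι] (ep : ι → V × V) (x j : ι → ℝ)
    (τ : V → Bool) (S : V → Bool) :
    potential ep x (fun c => bondSpin ep τ c * j c) S = potential ep x j (gaugePerm τ S) := by
  unfold potential
  refine Finset.sum_congr rfl fun c _ => ?_
  have : bondSpin ep (gaugePerm τ S) c = bondSpin ep S c * bondSpin ep τ c :=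
    bondSpin_xor ep S τ c
  rw [this]; ring

lemma partitionFn_flip {V ι : Type*} [Fintype V] [DecidableEq V] [Fintype ι]
    (ep : ι → V × V) (x j : ι → ℝ) (τ : V → Bool) :
    partitionFn ep x (fun c => bondSpin ep τ c * j c) = partitionFn ep x j := by
  unfold partitionFn
  simp_rw [potential_flip ep x j τ]
  exact Equiv.sum_comp (gaugePerm τ) (fun S => Real.exp (potential ep x j S))

lemma partitionFn_pos {V ι : Type*} [Fintype V] [DecidableEq V] [Fintype ι]
    (ep : ι → V × V) (x j : ι → ℝ) : 0 < partitionFn ep x j :=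
  Finset.sum_pos (fun S _ => Real.exp_pos _) Finset.univ_nonempty

lemma num_flip {V ι : Type*} [Fintype V] [DecidableEq V] [Fintype ι]
    (ep : ι → V × V) (x j : ι → ℝ) (τ : V → Bool) (b b' : ι) :
    (∑ S : V → Bool, (bondSpin ep S b * bondSpin ep S b') *
        Real.exp (potential ep x (fun c => bondSpin ep τ c * j c) S)) =
      (bondSpin ep τ b * bondSpin ep τ b') *
        ∑ S : V → Bool, (bondSpin ep S b * bondSpin ep S b') *
          Real.exp (potential ep x j S) := by
  simp_rw [potential_flip ep x j τ]
  rw [Finset.mul_sum]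
  refine Fintype.sum_equiv (gaugePerm τ)
    (fun S => (bondSpin ep S b * bondSpin ep S b') * Real.exp (potential ep x j (gaugePerm τ S)))
    (fun S => (bondSpin ep τ b * bondSpin ep τ b') *
      ((bondSpin ep S b * bondSpin ep S b') * Real.exp (potential ep x j S))) (fun S => ?_)
  have hb : bondSpin ep (gaugePerm τ S) b = bondSpin ep S b * bondSpin ep τ b :=
    bondSpin_xor ep S τ b
  have hb' : bondSpin ep (gaugePerm τ S) b' = bondSpin ep S b' * bondSpin ep τ b' :=
    bondSpin_xor ep S τ b'
  rw [hb, hb']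
  have h1 := bondSpin_mul_self ep τ b
  have h2 := bondSpin_mul_self ep τ b'
  set E := Real.exp (potential ep x j (gaugePerm τ S)) with hE
  set u := bondSpin ep S b
  set u' := bondSpin ep S b'
  set t := bondSpin ep τ b
  set t' := bondSpin ep τ b'
  linear_combination (-(u * u' * E)) * h1 + (-(u * u' * E * (t * t))) * h2

lemma gibbs_flip {V ι : Type*} [Fintype V] [DecidableEq V] [Fintype ι]
    (ep : ι → V × V) (x j : ι → ℝ) (τ : V → Bool) (b b' : ι) :
    gibbs ep x (fun c => bondSpin ep τ c * j c) (fun S => bondSpin ep S b * bondSpin ep S b') =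
      (bondSpin ep τ b * bondSpin ep τ b') *
        gibbs ep x j (fun S => bondSpin ep S b * bondSpin ep S b') := by
  unfold gibbs
  rw [partitionFn_flip ep x j τ, num_flip ep x j τ b b', mul_div_assoc]

lemma abs_gibbs_le_one {V ι : Type*} [Fintype V] [DecidableEq V] [Fintype ι]
    (ep : ι → V × V) (x j : ι → ℝ) (b b' : ι) :
    |gibbs ep x j (fun S => bondSpin ep S b * bondSpin ep S b')| ≤ 1 := by
  unfold gibbs
  rw [abs_div, abs_of_pos (partitionFn_pos ep x j),
    div_le_one (partitionFn_pos ep x j)]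
  calc |∑ S : V → Bool, (bondSpin ep S b * bondSpin ep S b') * Real.exp (potential ep x j S)|
      ≤ ∑ S : V → Bool, |(bondSpin ep S b * bondSpin ep S b') * Real.exp (potential ep x j S)| :=
        Finset.abs_sum_le_sum_abs _ _
    _ ≤ partitionFn ep x j := by
        unfold partitionFn
        refine Finset.sum_le_sum fun S _ => ?_
        rw [abs_mul, abs_mul, abs_bondSpin, abs_bondSpin, one_mul, one_mul,
          abs_of_pos (Real.exp_pos _)]



/-- componentwise multiplication by a ±1 vector, as a measurable equiv -/
def flipEquiv {ι : Type*} [Fintype ι] (c : ι → ℝ) (hc : ∀ i, c i * c i = 1) :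
    (ι → ℝ) ≃ᵐ (ι → ℝ) where
  toFun j := fun i => c i * j i
  invFun j := fun i => c i * j i
  left_inv j := by funext i; dsimp; rw [← mul_assoc, hc i, one_mul]
  right_inv j := by funext i; dsimp; rw [← mul_assoc, hc i, one_mul]
  measurable_toFun := measurable_pi_lambda _ fun i => (measurable_pi_apply i).const_mul _
  measurable_invFun := measurable_pi_lambda _ fun i => (measurable_pi_apply i).const_mul _

lemma measurePreserving_flip {ι : Type*} [Fintype ι] (x c : ι → ℝ)
    (hc : ∀ i, c i * c i = 1) :
    MeasurePreserving (flipEquiv c hc) (couplings (fun i => c i * x i)) (couplings x) := by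
  constructor
  · exact (flipEquiv c hc).measurable
  · unfold couplings
    refine (Measure.pi_eq fun s hs => ?_).symm
    rw [Measure.map_apply (flipEquiv c hc).measurable (MeasurableSet.univ_pi hs)]
    have hpre : (flipEquiv c hc) ⁻¹' (Set.pi Set.univ s)
        = Set.pi Set.univ (fun i => (c i * ·) ⁻¹' s i) := by
      ext j; simp [Set.mem_pi, flipEquiv]
    rw [hpre, Measure.pi_pi]
    refine Finset.prod_congr rfl fun i _ => ?_
    rw [← Measure.map_apply (measurable_const_mul _) (hs i), gaussianReal_map_const_mul]
    have h1 : c i * (c i * x i) = x i := by rw [← mul_assoc, hc i, one_mul]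
    have h2 : (NNReal.mk (c i ^ 2) (sq_nonneg _)) * 1 = 1 := by
      ext; simp [sq]; rw [hc i]
    rw [h1, h2]

/-- flipping the mean of a standard Gaussian is an exponential tilt -/
lemma gaussianReal_flip_withDensity (m : ℝ) (c : ℝ) (hc : c = 1 ∨ c = -1) :
    gaussianReal (c * m) 1 = (gaussianReal m 1).withDensity
      (fun y => ENNReal.ofReal (Real.exp ((c - 1) * (m * y)))) := by
  rcases hc with h | h
  · subst h
    simp only [one_mul, sub_self, zero_mul, Real.exp_zero, ENNReal.ofReal_one]
    exact (withDensity_one (μ := gaussianReal m 1)).symm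
  · subst h
    rw [gaussianReal_of_var_ne_zero _ one_ne_zero,
      gaussianReal_of_var_ne_zero _ one_ne_zero,
      ← withDensity_mul _ (measurable_gaussianPDF _ _)
        (by fun_prop : Measurable fun y : ℝ => ENNReal.ofReal (Real.exp ((-1 - 1) * (m * y))))]
    congr 1
    funext y
    rw [Pi.mul_apply]
    unfold gaussianPDF
    rw [← ENNReal.ofReal_mul (gaussianPDFReal_nonneg _ _ _)]
    congr 1
    unfold gaussianPDFReal
    rw [mul_assoc _ (Real.exp _) (Real.exp _), ← Real.exp_add]
    congr 1
    push_cast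
    ring

/-- lintegral of a product of coordinate functions over a finite product measure -/
lemma lintegral_pi_prod {ι : Type*} [Fintype ι] [DecidableEq ι] (μ : ι → Measure ℝ)
    [∀ i, SigmaFinite (μ i)] (f : ι → ℝ → ENNReal) (hf : ∀ i, Measurable (f i)) :
    ∫⁻ j, ∏ i, f i (j i) ∂Measure.pi μ = ∏ i, ∫⁻ y, f i y ∂μ i := by
  have hF : Measurable fun j : ι → ℝ => ∏ i, f i (j i) :=
    Finset.measurable_prod _ fun i _ => (hf i).comp (measurable_pi_apply i)
  have key : ∀ s : Finset ι, ∀ x : ι → ℝ,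
      (∫⋯∫⁻_s, (fun j => ∏ i, f i (j i)) ∂μ) x
        = (∏ i ∈ s, ∫⁻ y, f i y ∂μ i) * ∏ i ∈ sᶜ, f i (x i) := by
    intro s
    induction s using Finset.induction_on with
    | empty => intro x; simp
    | @insert a s ha ih =>
      intro x
      rw [lmarginal_insert _ hF ha]
      have hstep : ∀ y : ℝ,
          (∫⋯∫⁻_s, (fun j => ∏ i, f i (j i)) ∂μ) (Function.update x a y)
            = ((∏ i ∈ s, ∫⁻ z, f i z ∂μ i) * ∏ i ∈ sᶜ.erase a, f i (x i)) * f a y := by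
        intro y
        rw [ih]
        have ha' : a ∈ sᶜ := Finset.mem_compl.2 ha
        rw [← Finset.prod_erase_mul _ _ ha']
        have : ∀ i ∈ sᶜ.erase a, f i (Function.update x a y i) = f i (x i) := by
          intro i hi
          rw [Function.update_of_ne (Finset.ne_of_mem_erase hi)]
        rw [Finset.prod_congr rfl this, Function.update_self]
        ring
      simp_rw [hstep]
      rw [lintegral_const_mul _ (hf a), Finset.prod_insert ha, Finset.compl_insert]
      ring
  rw [lintegral_eq_lmarginal_univ (fun _ => 0), key Finset.univ (fun _ => 0)]
  simp

/-- the tilting density -/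
def dens {ι : Type*} [Fintype ι] (x c : ι → ℝ) (j : ι → ℝ) : ℝ :=
  ∏ i, Real.exp ((c i - 1) * (x i * j i))

lemma dens_nonneg {ι : Type*} [Fintype ι] (x c j : ι → ℝ) : 0 ≤ dens x c j :=
  Finset.prod_nonneg fun i _ => (Real.exp_pos _).le

lemma dens_continuous {ι : Type*} [Fintype ι] (x c : ι → ℝ) : Continuous (dens x c) :=
  continuous_finset_prod _ fun i _ =>
    (Real.continuous_exp.comp (continuous_const.mul (continuous_const.mul (continuous_apply i))))

lemma couplings_eq_withDensity {ι : Type*} [Fintype ι] [DecidableEq ι] (x c : ι → ℝ)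
    (hc : ∀ i, c i = 1 ∨ c i = -1) :
    couplings (fun i => c i * x i)
      = (couplings x).withDensity (fun j => ENNReal.ofReal (dens x c j)) := by
  set w : ι → ℝ → ENNReal := fun i y => ENNReal.ofReal (Real.exp ((c i - 1) * (x i * y))) with hw
  have hwm : ∀ i, Measurable (w i) := by
    intro i
    exact (Real.continuous_exp.comp (continuous_const.mul
      (continuous_const.mul continuous_id))).measurable.ennreal_ofReal
  have hd : ∀ j : ι → ℝ, ENNReal.ofReal (dens x c j) = ∏ i, w i (j i) := by
    intro j
    rw [dens, ← ENNReal.ofReal_prod_of_nonneg]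
    intro i _; exact (Real.exp_pos _).le
  unfold couplings
  refine (Measure.pi_eq (μ := fun b => gaussianReal ((fun i => c i * x i) b) 1) (μ' := (Measure.pi fun b => gaussianReal (x b) 1).withDensity
    fun j => ENNReal.ofReal (dens x c j)) fun s hs => ?_)
  rw [withDensity_apply _ (MeasurableSet.univ_pi hs), ← lintegral_indicator (MeasurableSet.univ_pi hs)]
  have hind : ∀ j : ι → ℝ, (Set.pi Set.univ s).indicator
      (fun j => ENNReal.ofReal (dens x c j)) j = ∏ i, (s i).indicator (w i) (j i) := by
    intro j
    by_cases h : j ∈ Set.pi Set.univ s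
    · rw [Set.indicator_of_mem h, hd]
      exact Finset.prod_congr rfl fun i _ =>
        (Set.indicator_of_mem (h i (Set.mem_univ i)) _).symm
    · rw [Set.indicator_of_notMem h]
      rw [Set.mem_pi] at h
      push_neg at h
      obtain ⟨i, _, hi⟩ := h
      exact (Finset.prod_eq_zero (Finset.mem_univ i)
        (Set.indicator_of_notMem hi _)).symm
  simp_rw [hind]
  rw [lintegral_pi_prod _ _ (fun i => (hwm i).indicator (hs i))]
  refine Finset.prod_congr rfl fun i _ => ?_
  rw [lintegral_indicator (hs i), ← withDensity_apply _ (hs i),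
    ← gaussianReal_flip_withDensity (x i) (c i) (hc i)]

lemma integrable_dens {ι : Type*} [Fintype ι] [DecidableEq ι] (x c : ι → ℝ)
    (hc : ∀ i, c i = 1 ∨ c i = -1) :
    Integrable (dens x c) (couplings x) := by
  have h1 : ∫⁻ j, ENNReal.ofReal (dens x c j) ∂(couplings x) = 1 := by
    have := couplings_eq_withDensity x c hc
    have h2 : ((couplings x).withDensity (fun j => ENNReal.ofReal (dens x c j))) Set.univ = 1 := by
      rw [← this]; exact measure_univ
    rwa [withDensity_apply _ MeasurableSet.univ, setLIntegral_univ] at h2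
  refine ⟨(dens_continuous x c).aestronglyMeasurable, ?_⟩
  rw [hasFiniteIntegral_def]
  have : ∀ j : ι → ℝ, ‖dens x c j‖ₑ = ENNReal.ofReal (dens x c j) := by
    intro j
    rw [← ofReal_norm, Real.norm_of_nonneg (dens_nonneg x c j)]
  simp_rw [this, h1]
  exact ENNReal.one_lt_top

lemma integral_couplings_mul {ι : Type*} [Fintype ι] [DecidableEq ι] (x c : ι → ℝ)
    (hc : ∀ i, c i = 1 ∨ c i = -1) (G : (ι → ℝ) → ℝ) :
    ∫ j, G j ∂couplings (fun i => c i * x i) = ∫ j, dens x c j * G j ∂couplings x := by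
  rw [couplings_eq_withDensity x c hc]
  have hmeas : Measurable fun j : ι → ℝ => Real.toNNReal (dens x c j) :=
    (dens_continuous x c).measurable.real_toNNReal
  have : (fun j : ι → ℝ => ENNReal.ofReal (dens x c j))
      = fun j => ((Real.toNNReal (dens x c j) : NNReal) : ENNReal) := rfl
  rw [this, integral_withDensity_eq_integral_smul hmeas G]
  refine integral_congr_ae (Filter.Eventually.of_forall fun j => ?_)
  dsimp only
  rw [NNReal.smul_def, smul_eq_mul, Real.coe_toNNReal _ (dens_nonneg x c j)]

/-- Nishimori gauge identity for a two-bond correlation: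
for all bonds `b, b'`, `[⟨S_b S_{b'}⟩] = [⟨S_b S_{b'}⟩²]`. -/
theorem nishimori_two_bond_identity
    {V ι : Type*} [Fintype V] [DecidableEq V] [Fintype ι]
    (ep : ι → V × V) (hep : ∀ b, (ep b).1 ≠ (ep b).2)
    (x : ι → ℝ) (hx : ∀ b, 0 ≤ x b) (b b' : ι) :
    quenched x (fun j => gibbs ep x j (fun S => bondSpin ep S b * bondSpin ep S b')) =
      quenched x (fun j =>
        (gibbs ep x j (fun S => bondSpin ep S b * bondSpin ep S b')) ^ 2) := by
  classical
  have hID : DecidableEq ι := Classical.decEq ι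
  set F : (V → Bool) → ℝ := fun S => bondSpin ep S b * bondSpin ep S b' with hF
  set g : (ι → ℝ) → ℝ := fun j => gibbs ep x j F with hg
  set ν := couplings x with hν
  -- continuity and bounds
  have hpot : ∀ S : V → Bool, Continuous fun j : ι → ℝ => potential ep x j S := fun S =>
    continuous_finset_sum _ fun c _ =>
      (continuous_const.mul (continuous_apply c)).mul continuous_const
  have hZc : Continuous fun j : ι → ℝ => partitionFn ep x j :=
    continuous_finset_sum _ fun S _ => Real.continuous_exp.comp (hpot S)
  have hgc : Continuous g := by
    apply Continuous.div
    · exact continuous_finset_sum _ fun S _ =>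
        continuous_const.mul (Real.continuous_exp.comp (hpot S))
    · exact hZc
    · exact fun j => (partitionFn_pos ep x j).ne'
  have hgbd : ∀ j, ‖g j‖ ≤ 1 := fun j => by
    rw [Real.norm_eq_abs]; exact abs_gibbs_le_one ep x j b b'
  have hggbd : ∀ j, ‖g j * g j‖ ≤ 1 := fun j => by
    rw [norm_mul]
    exact mul_le_one₀ (hgbd j) (norm_nonneg _) (hgbd j)
  -- sign facts
  have hσsq : ∀ (τ : V → Bool) (i : ι), bondSpin ep τ i * bondSpin ep τ i = 1 :=
    fun τ i => bondSpin_mul_self ep τ i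
  have hσpm : ∀ (τ : V → Bool) (i : ι), bondSpin ep τ i = 1 ∨ bondSpin ep τ i = -1 := by
    intro τ i
    rcases mul_self_eq_one_iff.mp (hσsq τ i) with h | h
    · exact Or.inl h
    · exact Or.inr h
  have hFsq : ∀ τ : V → Bool, F τ * F τ = 1 := by
    intro τ
    have h1 := bondSpin_mul_self ep τ b
    have h2 := bondSpin_mul_self ep τ b'
    show (bondSpin ep τ b * bondSpin ep τ b') * (bondSpin ep τ b * bondSpin ep τ b') = 1
    linear_combination (bondSpin ep τ b' * bondSpin ep τ b') * h1 + h2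
  -- Step A : gauge covariance of the quenched averages
  have stepA : ∀ τ : V → Bool,
      (∫ j, g j ∂ν) = F τ * ∫ j, g j ∂(couplings fun i => bondSpin ep τ i * x i) := by
    intro τ
    have hmp := measurePreserving_flip x (bondSpin ep τ) (hσsq τ)
    have h1 := hmp.integral_comp
      (MeasurableEquiv.measurableEmbedding (flipEquiv (bondSpin ep τ) (hσsq τ))) g
    rw [← h1]
    have h2 : ∀ j : ι → ℝ, g ((flipEquiv (bondSpin ep τ) (hσsq τ)) j) = F τ * g j := by
      intro j
      show gibbs ep x (fun i => bondSpin ep τ i * j i) F = F τ * gibbs ep x j F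
      rw [hF]
      exact gibbs_flip ep x j τ b b'
    simp_rw [h2]
    rw [integral_const_mul]
  have stepB : ∀ τ : V → Bool,
      (∫ j, g j * g j ∂ν) = ∫ j, g j * g j ∂(couplings fun i => bondSpin ep τ i * x i) := by
    intro τ
    have hmp := measurePreserving_flip x (bondSpin ep τ) (hσsq τ)
    have h1 := hmp.integral_comp
      (MeasurableEquiv.measurableEmbedding (flipEquiv (bondSpin ep τ) (hσsq τ)))
      (fun j => g j * g j)
    rw [← h1]
    refine integral_congr_ae (Filter.Eventually.of_forall fun j => ?_)
    have h2 : g ((flipEquiv (bondSpin ep τ) (hσsq τ)) j) = F τ * g j := by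
      show gibbs ep x (fun i => bondSpin ep τ i * j i) F = F τ * gibbs ep x j F
      rw [hF]; exact gibbs_flip ep x j τ b b'
    show g ((flipEquiv (bondSpin ep τ) (hσsq τ)) j) * g ((flipEquiv (bondSpin ep τ) (hσsq τ)) j)
        = g j * g j
    rw [h2]
    have := hFsq τ
    nlinarith [this]
  -- integrability
  have hdint : ∀ τ : V → Bool, Integrable (dens x (bondSpin ep τ)) ν :=
    fun τ => integrable_dens x _ (hσpm τ)
  have hint1 : ∀ τ : V → Bool,
      Integrable (fun j => dens x (bondSpin ep τ) j * g j) ν := by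
    intro τ
    have := (hdint τ).bdd_mul hgc.aestronglyMeasurable (Filter.Eventually.of_forall hgbd)
    exact this.congr (Filter.Eventually.of_forall fun j => mul_comm _ _)
  have hint2 : ∀ τ : V → Bool,
      Integrable (fun j => dens x (bondSpin ep τ) j * (g j * g j)) ν := by
    intro τ
    have := (hdint τ).bdd_mul (hgc.mul hgc).aestronglyMeasurable (Filter.Eventually.of_forall hggbd)
    exact this.congr (Filter.Eventually.of_forall fun j => mul_comm _ _)
  -- density rewrite
  have hdens_eq : ∀ (τ : V → Bool) (j : ι → ℝ),
      dens x (bondSpin ep τ) j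
        = Real.exp (potential ep x j τ) * Real.exp (-(∑ i, x i * j i)) := by
    intro τ j
    rw [show dens x (bondSpin ep τ) j = ∏ i, Real.exp ((bondSpin ep τ i - 1) * (x i * j i))
      from rfl, ← Real.exp_sum, ← Real.exp_add]
    congr 1
    rw [show potential ep x j τ = ∑ i, x i * j i * bondSpin ep τ i from rfl]
    rw [← Finset.sum_neg_distrib, ← Finset.sum_add_distrib]
    exact Finset.sum_congr rfl fun i _ => by ring
  -- numerator identity
  have hnum : ∀ j : ι → ℝ,
      (∑ τ : V → Bool, F τ * Real.exp (potential ep x j τ)) = g j * partitionFn ep x j := by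
    intro j
    rw [hg]
    exact (div_mul_cancel₀ _ (partitionFn_pos ep x j).ne').symm
  have hZsum : ∀ j : ι → ℝ,
      (∑ τ : V → Bool, Real.exp (potential ep x j τ)) = partitionFn ep x j := fun j => rfl
  -- the two key computations
  set N : ℕ := Fintype.card (V → Bool) with hN
  have key1 : (N : ℝ) * ∫ j, g j ∂ν
      = ∫ j, (g j * g j) * (Real.exp (-(∑ i, x i * j i)) * partitionFn ep x j) ∂ν := by
    calc (N : ℝ) * ∫ j, g j ∂ν
        = ∑ _τ : V → Bool, ∫ j, g j ∂ν := by
          rw [Finset.sum_const, Finset.card_univ, nsmul_eq_mul, hN]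
      _ = ∑ τ : V → Bool, F τ * ∫ j, dens x (bondSpin ep τ) j * g j ∂ν := by
          refine Finset.sum_congr rfl fun τ _ => ?_
          rw [stepA τ, integral_couplings_mul x _ (hσpm τ) g]
      _ = ∑ τ : V → Bool, ∫ j, F τ * (dens x (bondSpin ep τ) j * g j) ∂ν := by
          refine Finset.sum_congr rfl fun τ _ => ?_
          rw [integral_const_mul]
      _ = ∫ j, ∑ τ : V → Bool, F τ * (dens x (bondSpin ep τ) j * g j) ∂ν := by
          rw [integral_finset_sum _ (fun τ _ => (hint1 τ).const_mul (F τ))]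
      _ = ∫ j, (g j * g j) * (Real.exp (-(∑ i, x i * j i)) * partitionFn ep x j) ∂ν := by
          refine integral_congr_ae (Filter.Eventually.of_forall fun j => ?_)
          have : ∀ τ : V → Bool, F τ * (dens x (bondSpin ep τ) j * g j)
              = (g j * Real.exp (-(∑ i, x i * j i)))
                  * (F τ * Real.exp (potential ep x j τ)) := by
            intro τ; rw [hdens_eq τ j]; ring
          dsimp only
          rw [Finset.sum_congr rfl fun τ _ => this τ, ← Finset.mul_sum, hnum j]
          ring
  have key2 : (N : ℝ) * ∫ j, g j * g j ∂ν
      = ∫ j, (g j * g j) * (Real.exp (-(∑ i, x i * j i)) * partitionFn ep x j) ∂ν := by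
    calc (N : ℝ) * ∫ j, g j * g j ∂ν
        = ∑ _τ : V → Bool, ∫ j, g j * g j ∂ν := by
          rw [Finset.sum_const, Finset.card_univ, nsmul_eq_mul, hN]
      _ = ∑ τ : V → Bool, ∫ j, dens x (bondSpin ep τ) j * (g j * g j) ∂ν := by
          refine Finset.sum_congr rfl fun τ _ => ?_
          rw [stepB τ, integral_couplings_mul x _ (hσpm τ) (fun j => g j * g j)]
      _ = ∫ j, ∑ τ : V → Bool, dens x (bondSpin ep τ) j * (g j * g j) ∂ν := by
          rw [integral_finset_sum _ (fun τ _ => hint2 τ)]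
      _ = ∫ j, (g j * g j) * (Real.exp (-(∑ i, x i * j i)) * partitionFn ep x j) ∂ν := by
          refine integral_congr_ae (Filter.Eventually.of_forall fun j => ?_)
          have : ∀ τ : V → Bool, dens x (bondSpin ep τ) j * (g j * g j)
              = ((g j * g j) * Real.exp (-(∑ i, x i * j i))) * Real.exp (potential ep x j τ) := by
            intro τ; rw [hdens_eq τ j]; ring
          dsimp only
          rw [Finset.sum_congr rfl fun τ _ => this τ, ← Finset.mul_sum, hZsum j]
          ring
  -- conclude
  have hNne : (N : ℝ) ≠ 0 := by
    rw [hN]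
    exact_mod_cast Fintype.card_ne_zero
  have hfinal : (∫ j, g j ∂ν) = ∫ j, g j * g j ∂ν :=
    mul_left_cancel₀ hNne (key1.trans key2.symm)
  show (∫ j, g j ∂ν) = ∫ j, (g j) ^ 2 ∂ν
  simpa [pow_two] using hfinal

end
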